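/- Let K be the tiny Kaplansky superalgebra and J = J(V,ϑ) the Jordan superalgebra of a nondegenerate supersymmetric form on a purely odd 2-dimensional superspace. Then the linear map A(K) → A(J) sending (α₁, γ₁e+μ₁x+ν₁y, γ₂e+μ₂x+ν₂y, α₂) ↦ (α₁, γ₁1−μ₁u+2ν₁v, γ₂1+μ₂u−2ν₂v, α₂) is an isomorphism of superalgebras with superinvolution. -/

import Mathlib

section
variable {k : Type*} [Field k]

/-- The tiny Kaplansky superalgebra `K = ke ⊕ (kx + ky)`, coordinates `(e, x, y)`:
`e² = e`, `ex = (1/2)x`, `ey = (1/2)y`, `xy = e = −yx`, `x² = y² = 0`. -/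
def kapMul (a b : k × k × k) : k × k × k :=
  (a.1 * b.1 + a.2.1 * b.2.2 - a.2.2 * b.2.1,
   (2 : k)⁻¹ * (a.1 * b.2.1 + b.1 * a.2.1),
   (2 : k)⁻¹ * (a.1 * b.2.2 + b.1 * a.2.2))

/-- The supersymmetric trace form of `K`: `⟨e|e⟩ = 1`, `⟨x|y⟩ = 2 = −⟨y|x⟩`. -/
def kapForm (a b : k × k × k) : k :=
  a.1 * b.1 + 2 * a.2.1 * b.2.2 - 2 * a.2.2 * b.2.1

/-- The Jordan superalgebra `J = J(V,ϑ)`, `J₀ = k1`, `J₁ = ku + kv`,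
coordinates `(1, u, v)`: `1` is the unit, `uv = 1 = −vu`, `u² = v² = 0`. -/
def jvMul (a b : k × k × k) : k × k × k :=
  (a.1 * b.1 + a.2.1 * b.2.2 - a.2.2 * b.2.1,
   a.1 * b.2.1 + b.1 * a.2.1,
   a.1 * b.2.2 + b.1 * a.2.2)

/-- The cross product of `J(V,ϑ)` for the normalized trace `t(a,b,c) = a`. -/
def jvCross (x y : k × k × k) : k × k × k :=
  2 • jvMul x y - (3 * x.1) • y - (3 * y.1) • x
    + (9 * x.1 * y.1 - 3 * (jvMul x y).1) • ((1 : k), (0 : k), (0 : k))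

/-- Multiplication of the structurable superalgebra `A(K)`. -/
def aKapMul (z w : k × (k × k × k) × (k × k × k) × k) :
    k × (k × k × k) × (k × k × k) × k :=
  (z.1 * w.1 + 3 * kapForm z.2.1 w.2.2.1,
   z.1 • w.2.1 + w.2.2.2 • z.2.1 + 2 • kapMul z.2.2.1 w.2.2.1,
   w.1 • z.2.2.1 + z.2.2.2 • w.2.2.1 + 2 • kapMul z.2.1 w.2.1,
   z.2.2.2 * w.2.2.2 + 3 * kapForm z.2.2.1 w.2.1)

/-- Multiplication of the structurable superalgebra `A(J(V,ϑ))`. -/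
def aJvMul (z w : k × (k × k × k) × (k × k × k) × k) :
    k × (k × k × k) × (k × k × k) × k :=
  (z.1 * w.1 + 3 * (jvMul z.2.1 w.2.2.1).1,
   z.1 • w.2.1 + w.2.2.2 • z.2.1 + jvCross z.2.2.1 w.2.2.1,
   w.1 • z.2.2.1 + z.2.2.2 • w.2.2.1 + jvCross z.2.1 w.2.1,
   z.2.2.2 * w.2.2.2 + 3 * (jvMul z.2.2.1 w.2.1).1)

/-- The superinvolution `(α, x, y, β) ↦ (β, x, y, α)`. -/
def aSwap (z : k × (k × k × k) × (k × k × k) × k) :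
    k × (k × k × k) × (k × k × k) × k :=
  (z.2.2.2, z.2.1, z.2.2.1, z.1)

/-- The map `A(K) → A(J)`,
`(α₁, γ₁e+μ₁x+ν₁y, γ₂e+μ₂x+ν₂y, α₂) ↦ (α₁, γ₁1−μ₁u+2ν₁v, γ₂1+μ₂u−2ν₂v, α₂)`. -/
def kapToJv (z : k × (k × k × k) × (k × k × k) × k) :
    k × (k × k × k) × (k × k × k) × k :=
  (z.1, (z.2.1.1, - z.2.1.2.1, 2 * z.2.1.2.2),
   (z.2.2.1.1, z.2.2.1.2.1, - (2 * z.2.2.1.2.2)), z.2.2.2)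

end

/-- The linear map `A(K) → A(J(V,ϑ))` sending
`(α₁, γ₁e+μ₁x+ν₁y, γ₂e+μ₂x+ν₂y, α₂)` to `(α₁, γ₁1−μ₁u+2ν₁v, γ₂1+μ₂u−2ν₂v, α₂)`
is an isomorphism of superalgebras with superinvolution, where `K` is the tiny
Kaplansky superalgebra and `J(V,ϑ)` the Jordan superalgebra of a nondegenerate
supersymmetric form on a purely odd two-dimensional superspace. -/
theorem kaplansky_to_Jv_isomorphism
    (k : Type*) [Field k] (hk2 : (2 : k) ≠ 0) (hk3 : (3 : k) ≠ 0) :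
    IsLinearMap k (kapToJv (k := k)) ∧
    Function.Bijective (kapToJv (k := k)) ∧
    (∀ z w : k × (k × k × k) × (k × k × k) × k,
      kapToJv (aKapMul z w) = aJvMul (kapToJv z) (kapToJv w)) ∧
    (∀ z : k × (k × k × k) × (k × k × k) × k,
      kapToJv (aSwap z) = aSwap (kapToJv z)) := by
  refine ⟨⟨?_, ?_⟩, ⟨?_, ?_⟩, ?_, ?_⟩
  · intro z w
    simp only [kapToJv, Prod.mk_add_mk, Prod.fst_add, Prod.snd_add]
    refine Prod.ext (by ring) (Prod.ext (Prod.ext (by ring) (Prod.ext (by ring) (by ring))) (Prod.ext (Prod.ext (by ring) (Prod.ext (by ring) (by ring))) (by ring)))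
  · intro c z
    simp only [kapToJv, Prod.smul_mk, Prod.smul_fst, Prod.smul_snd, smul_eq_mul]
    refine Prod.ext (by ring) (Prod.ext (Prod.ext (by ring) (Prod.ext (by ring) (by ring))) (Prod.ext (Prod.ext (by ring) (Prod.ext (by ring) (by ring))) (by ring)))
  · intro z w h
    simp only [kapToJv, Prod.ext_iff] at h
    obtain ⟨h1, ⟨h2, h3, h4⟩, ⟨h5, h6, h7⟩, h8⟩ := h
    have h4' : z.2.1.2.2 = w.2.1.2.2 := by
      field_simp at h4
      simpa [eq_comm] using h4
    have h7' : z.2.2.1.2.2 = w.2.2.1.2.2 := by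
      field_simp at h7
      simpa [eq_comm] using h7
    have h3' : z.2.1.2.1 = w.2.1.2.1 := neg_injective h3
    exact Prod.ext h1 (Prod.ext (Prod.ext h2 (Prod.ext h3' h4')) (Prod.ext (Prod.ext h5 (Prod.ext h6 h7')) h8))
  · intro z
    exact ⟨(z.1, (z.2.1.1, - z.2.1.2.1, 2⁻¹ * z.2.1.2.2),
      (z.2.2.1.1, z.2.2.1.2.1, - (2⁻¹ * z.2.2.1.2.2)), z.2.2.2), by
      simp only [kapToJv]
      refine Prod.ext rfl (Prod.ext (Prod.ext rfl (Prod.ext (by ring) (by field_simp))) (Prod.ext (Prod.ext rfl (Prod.ext rfl (by field_simp))) rfl))⟩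
  · intro z w
    simp only [kapToJv, aKapMul, aJvMul, kapMul, kapForm, jvMul, jvCross, Prod.smul_mk,
      smul_eq_mul, Prod.mk_add_mk, Prod.mk_sub_mk, smul_sub, smul_add, Prod.smul_fst,
      Prod.smul_snd, Prod.fst_add, Prod.snd_add, Prod.fst_sub, Prod.snd_sub, nsmul_eq_mul,
      Nat.cast_ofNat, mul_zero, mul_one]
    refine Prod.ext (by ring) (Prod.ext (Prod.ext ?_ (Prod.ext ?_ ?_)) (Prod.ext (Prod.ext ?_ (Prod.ext ?_ ?_)) (by ring))) <;> field_simp <;> ring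
  · intro z; rfl
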